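/- Every (V*)-set in a Lipschitz-free space is tight: if M is a complete pointed metric space and Γ ⊂ F(M) is a (V*)-set with respect to F(M), then for every ε > 0 there exists a compact set K ⊂ M with 0 ∈ K such that Γ ⊂ F(K) + ε B_{F(M)}. -/

import Mathlib

open Filter Topology Metric Set

noncomputable section

/-- A formal series `∑ yₙ` in a normed space `Y` is weakly unconditionally Cauchy (WUC)
if `∑ |⟨φ, yₙ⟩| < ∞` for every continuous linear functional `φ` on `Y`. -/
def IsWUC {Y : Type*} [SeminormedAddCommGroup Y] [NormedSpace ℝ Y] (y : ℕ → Y) : Prop :=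
  ∀ φ : Y →L[ℝ] ℝ, Summable fun n => |φ (y n)|

/-- `Γ` is a (V*)-set in `X`: for every WUC series `∑ fₙ` in the dual `X*`,
`sup_{x ∈ Γ} |⟨x, fₙ⟩| → 0`. -/
def IsVStarSet {X : Type*} [SeminormedAddCommGroup X] [NormedSpace ℝ X] (Γ : Set X) : Prop :=
  ∀ f : ℕ → (X →L[ℝ] ℝ), IsWUC f →
    ∀ ε > (0 : ℝ), ∀ᶠ n in atTop, ∀ x ∈ Γ, |f n x| ≤ ε

/-- `Γ` is relatively weakly compact: its closure in the weak topology is compact. -/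
def RelWeaklyCompact {X : Type*} [SeminormedAddCommGroup X] [NormedSpace ℝ X]
    (Γ : Set X) : Prop :=
  IsCompact (closure ((toWeakSpace ℝ X) '' Γ))

/-- A normed space has Pełczyński's property (V*) if every (V*)-set is relatively
weakly compact. -/
def HasPropertyVStar (X : Type*) [SeminormedAddCommGroup X] [NormedSpace ℝ X] : Prop :=
  ∀ Γ : Set X, IsVStarSet Γ → RelWeaklyCompact Γ

/-- `F`, together with the map `δ : M → F`, is (a realization of) the Lipschitz-free space
over the pointed metric space `(M, o)`: `δ` is a base-point-preserving isometric embedding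
whose range has dense linear span, and every Lipschitz function `f : M → ℝ` vanishing at
the base point lifts to a continuous linear functional of norm at most `Lip(f)` (this
characterizes `F(M)`, with dual `Lip₀(M)`, up to isometric isomorphism). -/
structure IsLipschitzFree {M : Type*} [MetricSpace M] (o : M)
    {F : Type*} [NormedAddCommGroup F] [NormedSpace ℝ F] (δ : M → F) : Prop where
  isometry : Isometry δ
  map_base : δ o = 0
  dense_span : Dense (Submodule.span ℝ (Set.range δ) : Set F)
  lift : ∀ (L : NNReal) (f : M → ℝ), LipschitzWith L f → f o = 0 →
    ∃ φ : F →L[ℝ] ℝ, ‖φ‖ ≤ L ∧ ∀ x, φ (δ x) = f x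

/-- The subspace of `F` corresponding to the Lipschitz-free space `F(S)` over a subset
`S ⊆ M`: the closed linear span of `δ(S)`. -/
def freeSpan {M : Type*} [MetricSpace M] {F : Type*} [NormedAddCommGroup F]
    [NormedSpace ℝ F] (δ : M → F) (S : Set M) : Submodule ℝ F :=
  (Submodule.span ℝ (δ '' S)).topologicalClosure

theorem mem_freeSpan {M : Type*} [MetricSpace M] {F : Type*} [NormedAddCommGroup F]
    [NormedSpace ℝ F] (δ : M → F) {S : Set M} {x : M} (hx : x ∈ S) :
    δ x ∈ freeSpan δ S :=
  (Submodule.span ℝ (δ '' S)).le_topologicalClosure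
    (Submodule.subset_span ⟨x, hx, rfl⟩)


namespace VStarAux

variable {M : Type*} [MetricSpace M]

/-- Real-valued Lipschitz estimate with real constant. -/
def LipR (C : ℝ) (u : M → ℝ) : Prop := ∀ x y : M, |u x - u y| ≤ C * dist x y

lemma LipR.mono {C C' : ℝ} {u : M → ℝ} (h : LipR C u) (hC : C ≤ C') : LipR C' u :=
  fun x y => (h x y).trans (by nlinarith [dist_nonneg (x := x) (y := y)])

lemma lipR_const (c : ℝ) : LipR 0 (fun _ : M => c) := by
  intro x y; simp

lemma LipR.add {a b : ℝ} {u v : M → ℝ} (hu : LipR a u) (hv : LipR b v) :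
    LipR (a + b) (fun x => u x + v x) := by
  intro x y
  have := hu x y; have := hv x y
  have : |u x + v x - (u y + v y)| ≤ |u x - u y| + |v x - v y| := by
    have : u x + v x - (u y + v y) = (u x - u y) + (v x - v y) := by ring
    rw [this]; exact abs_add_le _ _
  nlinarith [hu x y, hv x y]

lemma LipR.sub {a b : ℝ} {u v : M → ℝ} (hu : LipR a u) (hv : LipR b v) :
    LipR (a + b) (fun x => u x - v x) := by
  intro x y
  have h : |u x - v x - (u y - v y)| ≤ |u x - u y| + |v x - v y| := by
    have : u x - v x - (u y - v y) = (u x - u y) - (v x - v y) := by ring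
    rw [this]; exact abs_sub _ _
  nlinarith [hu x y, hv x y]

lemma LipR.neg {a : ℝ} {u : M → ℝ} (hu : LipR a u) : LipR a (fun x => -u x) := by
  intro x y
  have : |-u x - -u y| = |u x - u y| := by rw [abs_sub_comm]; ring_nf
  rw [this]; exact hu x y

/-- Product of bounded Lipschitz functions. -/
lemma LipR.mul {a b A B : ℝ} {u v : M → ℝ} (hu : LipR a u) (hA : ∀ x, |u x| ≤ A)
    (hv : LipR b v) (hB : ∀ x, |v x| ≤ B) :
    LipR (a * B + A * b) (fun x => u x * v x) := by
  intro x y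
  have key : u x * v x - u y * v y = (u x - u y) * v x + u y * (v x - v y) := by ring
  calc |u x * v x - u y * v y| ≤ |(u x - u y) * v x| + |u y * (v x - v y)| := by
        rw [key]; exact abs_add_le _ _
    _ = |u x - u y| * |v x| + |u y| * |v x - v y| := by rw [abs_mul, abs_mul]
    _ ≤ (a * dist x y) * B + A * (b * dist x y) := by
        have h1 := hu x y; have h2 := hv x y; have h3 := hA y; have h4 := hB x
        have n1 : (0:ℝ) ≤ |u x - u y| := abs_nonneg _
        have n2 : (0:ℝ) ≤ |v x - v y| := abs_nonneg _
        have n3 : (0:ℝ) ≤ |u y| := abs_nonneg _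
        have n4 : (0:ℝ) ≤ |v x| := abs_nonneg _
        nlinarith
    _ = (a * B + A * b) * dist x y := by ring

lemma abs_min_sub_min (a b a' b' : ℝ) :
    |min a b - min a' b'| ≤ max |a - a'| |b - b'| := by
  have h5 : a - a' ≤ |a - a'| := le_abs_self _
  have h6 : a' - a ≤ |a - a'| := by rw [abs_sub_comm]; exact le_abs_self _
  have h7 : b - b' ≤ |b - b'| := le_abs_self _
  have h8 : b' - b ≤ |b - b'| := by rw [abs_sub_comm]; exact le_abs_self _
  have l1 := le_max_left |a - a'| |b - b'|
  have l2 := le_max_right |a - a'| |b - b'|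
  rw [abs_le]
  constructor <;>
  · simp only [min_def]
    split_ifs <;> linarith

lemma LipR.min {a b : ℝ} {u v : M → ℝ} (hu : LipR a u) (hv : LipR b v) :
    LipR (max a b) (fun x => min (u x) (v x)) := by
  intro x y
  refine (abs_min_sub_min _ _ _ _).trans ?_
  rcases max_cases |u x - u y| |v x - v y| with ⟨h, _⟩ | ⟨h, _⟩ <;> rw [h]
  · exact (hu x y).trans (by nlinarith [dist_nonneg (x := x) (y := y), le_max_left a b])
  · exact (hv x y).trans (by nlinarith [dist_nonneg (x := x) (y := y), le_max_right a b])


lemma abs_max_sub_max (a b a' b' : ℝ) :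
    |max a b - max a' b'| ≤ max |a - a'| |b - b'| := by
  have h5 : a - a' ≤ |a - a'| := le_abs_self _
  have h6 : a' - a ≤ |a - a'| := by rw [abs_sub_comm]; exact le_abs_self _
  have h7 : b - b' ≤ |b - b'| := le_abs_self _
  have h8 : b' - b ≤ |b - b'| := by rw [abs_sub_comm]; exact le_abs_self _
  have l1 := le_max_left |a - a'| |b - b'|
  have l2 := le_max_right |a - a'| |b - b'|
  rw [abs_le]
  constructor <;>
  · simp only [max_def]
    split_ifs <;> linarith

/-- clamp between `1` and `0`-type bounds: `|clamp s - clamp t| ≤ |s - t|` for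
`clamp v = max 0 (min 1 v)`. -/
lemma abs_clamp01_sub (s t : ℝ) :
    |max 0 (min 1 s) - max 0 (min 1 t)| ≤ |s - t| := by
  have h1 : |min 1 s - min 1 t| ≤ max |(1:ℝ) - 1| |s - t| := abs_min_sub_min _ _ _ _
  have h2 : |max 0 (min 1 s) - max 0 (min 1 t)| ≤ max |(0:ℝ) - 0| |min 1 s - min 1 t| :=
    abs_max_sub_max _ _ _ _
  have h3 : max |(1:ℝ) - 1| |s - t| = |s - t| := by
    simp [abs_nonneg]
  have h4 : max |(0:ℝ) - 0| |min 1 s - min 1 t| = |min 1 s - min 1 t| := by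
    simp [abs_nonneg]
  rw [h4] at h2; rw [h3] at h1; exact h2.trans h1

/-- Clamp a function to `[-c, c]`. -/
def clampR (c : ℝ) (u : M → ℝ) : M → ℝ := fun x => max (-c) (min c (u x))

lemma lipR_clampR {a c : ℝ} {u : M → ℝ} (hu : LipR a u) : LipR a (clampR c u) := by
  intro x y
  have h1 : |clampR c u x - clampR c u y| ≤ max |(-c) - (-c)| |min c (u x) - min c (u y)| :=
    abs_max_sub_max _ _ _ _
  have h2 : |min c (u x) - min c (u y)| ≤ max |c - c| |u x - u y| := abs_min_sub_min _ _ _ _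
  have e1 : |(-c) - (-c)| = (0:ℝ) := by simp
  have e2 : |c - c| = (0:ℝ) := by simp
  rw [e1, max_eq_right (abs_nonneg _)] at h1
  rw [e2, max_eq_right (abs_nonneg _)] at h2
  exact (h1.trans h2).trans (hu x y)

lemma clampR_abs_le {c : ℝ} (hc : 0 ≤ c) (u : M → ℝ) (x : M) : |clampR c u x| ≤ c := by
  rw [abs_le, clampR]
  constructor
  · exact le_max_left _ _
  · exact max_le (by linarith) ((min_le_left _ _))

lemma clampR_eq_of_abs_le {c : ℝ} {u : M → ℝ} {x : M} (h : |u x| ≤ c) : clampR c u x = u x := by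
  rw [abs_le] at h
  rw [clampR, min_eq_right h.2, max_eq_right h.1]

/-- The plateau function of a set `s` at scale `d` : equal to `1` on `[s]_d`,
vanishing outside `[s]_{2d}`, `(1/d)`-Lipschitz. -/
def plat (s : Set M) (d : ℝ) : M → ℝ := fun x => max 0 (min 1 (2 - infDist x s / d))

lemma plat_nonneg (s : Set M) (d : ℝ) (x : M) : 0 ≤ plat s d x := le_max_left _ _

lemma plat_le_one (s : Set M) (d : ℝ) (x : M) : plat s d x ≤ 1 :=
  max_le (by norm_num) (min_le_left _ _)

lemma plat_eq_one {s : Set M} {d : ℝ} (hd : 0 < d) {x : M} (h : infDist x s ≤ d) :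
    plat s d x = 1 := by
  have h1 : infDist x s / d ≤ 1 := (div_le_one hd).2 h
  have : (1:ℝ) ≤ 2 - infDist x s / d := by linarith
  rw [plat, min_eq_left this, max_eq_right (by norm_num : (0:ℝ) ≤ 1)]

lemma plat_eq_zero {s : Set M} {d : ℝ} (hd : 0 < d) {x : M} (h : 2 * d ≤ infDist x s) :
    plat s d x = 0 := by
  have h1 : (2:ℝ) ≤ infDist x s / d := (le_div_iff₀ hd).2 (by linarith)
  have h2 : 2 - infDist x s / d ≤ 0 := by linarith
  have h3 : min 1 (2 - infDist x s / d) ≤ 0 := (min_le_right _ _).trans h2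
  rw [plat]; exact max_eq_left h3

lemma infDist_lt_of_plat_ne_zero {s : Set M} {d : ℝ} (hd : 0 < d) {x : M}
    (h : plat s d x ≠ 0) : infDist x s < 2 * d := by
  by_contra hc
  exact h (plat_eq_zero hd (le_of_not_gt hc))

lemma abs_infDist_sub_le (s : Set M) (x y : M) :
    |infDist x s - infDist y s| ≤ dist x y := by
  rw [abs_sub_le_iff]
  constructor
  · have := infDist_le_infDist_add_dist (s := s) (x := x) (y := y); linarith
  · have := infDist_le_infDist_add_dist (s := s) (x := y) (y := x)
    rw [dist_comm] at this; linarith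

lemma lipR_plat (s : Set M) {d : ℝ} (hd : 0 < d) : LipR (1/d) (plat s d) := by
  intro x y
  refine (abs_clamp01_sub _ _).trans ?_
  have : (2 - infDist x s / d) - (2 - infDist y s / d) = (infDist y s - infDist x s) / d := by
    ring
  rw [this, abs_div, abs_of_pos hd, div_le_iff₀ hd]
  calc |infDist y s - infDist x s| ≤ dist y x := abs_infDist_sub_le s y x
    _ = 1 / d * dist x y * d := by rw [dist_comm]; field_simp

section Free

variable {F : Type*} [NormedAddCommGroup F] [NormedSpace ℝ F]
variable {o : M} {δ : M → F}

/-- Two continuous functionals agreeing on `δ(M)` agree everywhere. -/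
lemma lift_unique (hδ : IsLipschitzFree o δ) {φ ψ : F →L[ℝ] ℝ}
    (h : ∀ x, φ (δ x) = ψ (δ x)) : φ = ψ := by
  have hle : Submodule.span ℝ (Set.range δ) ≤ LinearMap.ker ((φ - ψ : F →L[ℝ] ℝ) : F →ₗ[ℝ] ℝ) := by
    rw [Submodule.span_le]
    rintro _ ⟨x, rfl⟩
    simp only [SetLike.mem_coe, LinearMap.mem_ker, ContinuousLinearMap.coe_coe,
      ContinuousLinearMap.sub_apply]
    rw [h x]; ring
  have hker : IsClosed ((LinearMap.ker ((φ - ψ : F →L[ℝ] ℝ) : F →ₗ[ℝ] ℝ) : Set F)) := by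
    exact isClosed_eq (φ - ψ).continuous continuous_const
  have hsub : closure (Submodule.span ℝ (Set.range δ) : Set F)
      ⊆ (LinearMap.ker ((φ - ψ : F →L[ℝ] ℝ) : F →ₗ[ℝ] ℝ) : Set F) :=
    closure_minimal (fun z hz => hle hz) hker
  have hall : ∀ z : F, (φ - ψ) z = 0 := by
    intro z
    have hz : z ∈ closure (Submodule.span ℝ (Set.range δ) : Set F) := hδ.dense_span z
    exact hsub hz
  ext z
  have := hall z
  rw [ContinuousLinearMap.sub_apply, sub_eq_zero] at this
  exact this

/-- Existence of the lift with a real Lipschitz bound. -/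
lemma exists_lift (hδ : IsLipschitzFree o δ) {C : ℝ} {u : M → ℝ} (hC : 0 ≤ C)
    (hu : LipR C u) (ho : u o = 0) :
    ∃ φ : F →L[ℝ] ℝ, ‖φ‖ ≤ C ∧ ∀ x, φ (δ x) = u x := by
  have hlip : LipschitzWith ⟨C, hC⟩ u := by
    apply LipschitzWith.of_dist_le_mul
    intro x y
    rw [Real.dist_eq]
    exact hu x y
  obtain ⟨φ, h1, h2⟩ := hδ.lift ⟨C, hC⟩ u hlip ho
  exact ⟨φ, by exact h1, h2⟩

/-- Approximation of any element of `F` by a finite combination of `δ`-evaluations. -/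
lemma exists_approx (hδ : IsLipschitzFree o δ) (γ : F) {η : ℝ} (hη : 0 < η) :
    ∃ (n : ℕ) (a : Fin n → ℝ) (x : Fin n → M), ‖γ - ∑ i, a i • δ (x i)‖ ≤ η := by
  have hγ : γ ∈ closure (Submodule.span ℝ (Set.range δ) : Set F) := hδ.dense_span γ
  rw [Metric.mem_closure_iff] at hγ
  obtain ⟨μ, hμmem, hμ⟩ := hγ η hη
  have hμmem' : μ ∈ Submodule.span ℝ (Set.range δ) := hμmem
  obtain ⟨n, f, g, hsum⟩ := Submodule.mem_span_set'.1 hμmem'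
  choose x hx using fun i => (g i).2
  refine ⟨n, f, x, ?_⟩
  have heq : (∑ i, f i • δ (x i)) = μ := by
    rw [← hsum]
    exact Finset.sum_congr rfl fun i _ => by rw [hx i]
  rw [heq, ← dist_eq_norm]
  exact le_of_lt hμ

/-- Functional applied to a finite combination equals the weighted sum of function values. -/
lemma eval_sum (hδ : IsLipschitzFree o δ) {u : M → ℝ} {φ : F →L[ℝ] ℝ}
    (hφ : ∀ x, φ (δ x) = u x) {n : ℕ} (a : Fin n → ℝ) (x : Fin n → M) :
    φ (∑ i, a i • δ (x i)) = ∑ i, a i * u (x i) := by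
  rw [map_sum]
  exact Finset.sum_congr rfl fun i _ => by rw [map_smul, hφ (x i)]; rfl

lemma pair_transfer {φ : F →L[ℝ] ℝ} {γ μ : F} {C η : ℝ}
    (hφ : ‖φ‖ ≤ C) (hγμ : ‖γ - μ‖ ≤ η) : |φ γ - φ μ| ≤ C * η := by
  have : φ γ - φ μ = φ (γ - μ) := by rw [map_sub]
  rw [this]
  calc |φ (γ - μ)| ≤ ‖φ‖ * ‖γ - μ‖ := φ.le_opNorm _
    _ ≤ C * η := by
        have h0 : (0:ℝ) ≤ ‖γ - μ‖ := norm_nonneg _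
        have h1 : (0:ℝ) ≤ ‖φ‖ := norm_nonneg _
        nlinarith

end Free


section Master

variable {F : Type*} [NormedAddCommGroup F] [NormedSpace ℝ F]
variable {o : M} {δ : M → F}

lemma disjoint_signsum_lip {Λ : ℝ} (hΛ0 : 0 ≤ Λ) (v : ℕ → M → ℝ)
    (hLip : ∀ j, LipR Λ (v j))
    (hdisj : ∀ x : M, ∀ j k, v j x ≠ 0 → v k x ≠ 0 → j = k)
    (n : ℕ) (σ : ℕ → ℝ) (hσ : ∀ j, |σ j| ≤ 1) :
    LipR (2*Λ) (fun x => ∑ j ∈ Finset.range n, σ j * v j x) := by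
  intro x y
  classical
  set S : Finset ℕ := (Finset.range n).filter (fun j => v j x ≠ 0 ∨ v j y ≠ 0) with hS
  have hsum : (∑ j ∈ Finset.range n, σ j * v j x) - (∑ j ∈ Finset.range n, σ j * v j y)
      = ∑ j ∈ S, (σ j * v j x - σ j * v j y) := by
    rw [← Finset.sum_sub_distrib, hS]
    refine (Finset.sum_filter_of_ne ?_).symm
    intro j _ hne
    by_contra hcon
    push_neg at hcon
    apply hne
    rw [hcon.1, hcon.2]; ring
  have hterm : ∀ j ∈ S, |σ j * v j x - σ j * v j y| ≤ Λ * dist x y := by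
    intro j _
    have : σ j * v j x - σ j * v j y = σ j * (v j x - v j y) := by ring
    rw [this, abs_mul]
    have h1 := hσ j
    have h2 := hLip j x y
    have h3 : (0:ℝ) ≤ |v j x - v j y| := abs_nonneg _
    nlinarith
  have hcard : S.card ≤ 2 := by
    have h1 : S ⊆ (Finset.range n).filter (fun j => v j x ≠ 0)
        ∪ (Finset.range n).filter (fun j => v j y ≠ 0) := by
      intro j hj
      rw [hS, Finset.mem_filter] at hj
      rcases hj.2 with h | h
      · exact Finset.mem_union_left _ (Finset.mem_filter.2 ⟨hj.1, h⟩)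
      · exact Finset.mem_union_right _ (Finset.mem_filter.2 ⟨hj.1, h⟩)
    have c1 : ((Finset.range n).filter (fun j => v j x ≠ 0)).card ≤ 1 :=
      Finset.card_le_one.2 fun a ha b hb =>
        hdisj x a b (Finset.mem_filter.1 ha).2 (Finset.mem_filter.1 hb).2
    have c2 : ((Finset.range n).filter (fun j => v j y ≠ 0)).card ≤ 1 :=
      Finset.card_le_one.2 fun a ha b hb =>
        hdisj y a b (Finset.mem_filter.1 ha).2 (Finset.mem_filter.1 hb).2
    have := Finset.card_union_le ((Finset.range n).filter (fun j => v j x ≠ 0))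
      ((Finset.range n).filter (fun j => v j y ≠ 0))
    have := Finset.card_le_card h1
    omega
  calc |(∑ j ∈ Finset.range n, σ j * v j x) - (∑ j ∈ Finset.range n, σ j * v j y)|
      = |∑ j ∈ S, (σ j * v j x - σ j * v j y)| := by rw [hsum]
    _ ≤ ∑ j ∈ S, |σ j * v j x - σ j * v j y| := Finset.abs_sum_le_sum_abs _ _
    _ ≤ ∑ _j ∈ S, Λ * dist x y := Finset.sum_le_sum hterm
    _ = S.card * (Λ * dist x y) := by rw [Finset.sum_const, nsmul_eq_mul]
    _ ≤ 2 * (Λ * dist x y) := by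
        have hd : (0:ℝ) ≤ Λ * dist x y := mul_nonneg hΛ0 dist_nonneg
        have : (S.card : ℝ) ≤ 2 := by exact_mod_cast hcard
        nlinarith
    _ = 2 * Λ * dist x y := by ring

/-- The master contradiction: an infinite family of uniformly Lipschitz, disjointly
supported functions catching a fixed amount from elements of a (V*)-set is impossible. -/
lemma no_disjoint_catches (hδ : IsLipschitzFree o δ) {Γ : Set F} (hΓ : IsVStarSet Γ)
    {c Λ : ℝ} (hc : 0 < c) (hΛ : 0 ≤ Λ)
    (v : ℕ → M → ℝ) (γs : ℕ → F)
    (hγs : ∀ j, γs j ∈ Γ)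
    (hLip : ∀ j, LipR Λ (v j))
    (ho : ∀ j, v j o = 0)
    (hdisj : ∀ x : M, ∀ j k, v j x ≠ 0 → v k x ≠ 0 → j = k)
    (φs : ℕ → F →L[ℝ] ℝ)
    (hφs : ∀ j x, φs j (δ x) = v j x)
    (hcatch : ∀ j, c ≤ φs j (γs j)) : False := by
  classical
  have hWUC : IsWUC φs := by
    intro ψ
    apply summable_of_sum_range_le (c := ‖ψ‖ * (2*Λ)) (fun n => abs_nonneg _)
    intro n
    set σ : ℕ → ℝ := fun j => if 0 ≤ ψ (φs j) then 1 else -1 with hσdef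
    have hσ : ∀ j, |σ j| ≤ 1 := by
      intro j; rw [hσdef]; dsimp only; split_ifs <;> simp
    have habs : ∀ j, |ψ (φs j)| = σ j * ψ (φs j) := by
      intro j; rw [hσdef]; dsimp only; split_ifs with h
      · rw [one_mul, abs_of_nonneg h]
      · rw [neg_one_mul, abs_of_neg (lt_of_not_ge h)]
    have hsum : ∑ j ∈ Finset.range n, |ψ (φs j)|
        = ψ (∑ j ∈ Finset.range n, σ j • φs j) := by
      rw [map_sum]
      refine Finset.sum_congr rfl fun j _ => ?_
      rw [habs j, map_smul, smul_eq_mul]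
    have hv : LipR (2*Λ) (fun x => ∑ j ∈ Finset.range n, σ j * v j x) :=
      disjoint_signsum_lip hΛ v hLip hdisj n σ hσ
    obtain ⟨Φ, hΦ1, hΦ2⟩ := exists_lift hδ (by positivity) hv
      (show (∑ j ∈ Finset.range n, σ j * v j o) = 0 from
        Finset.sum_eq_zero fun j _ => by rw [ho j, mul_zero])
    have heq : (∑ j ∈ Finset.range n, σ j • φs j) = Φ := by
      apply lift_unique hδ
      intro x
      rw [hΦ2 x]
      rw [ContinuousLinearMap.sum_apply]
      refine Finset.sum_congr rfl fun j _ => ?_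
      rw [ContinuousLinearMap.smul_apply, hφs j x, smul_eq_mul]
    rw [hsum, heq]
    calc ψ Φ ≤ |ψ Φ| := le_abs_self _
      _ ≤ ‖ψ‖ * ‖Φ‖ := ψ.le_opNorm _
      _ ≤ ‖ψ‖ * (2*Λ) := by nlinarith [norm_nonneg ψ, norm_nonneg Φ]
  have hev := hΓ φs hWUC (c/2) (by linarith)
  obtain ⟨j, hj⟩ := hev.exists
  have h1 := hj (γs j) (hγs j)
  have h2 := hcatch j
  have h3 : φs j (γs j) ≤ |φs j (γs j)| := le_abs_self _
  linarith

end Master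

section Radial

variable {F : Type*} [NormedAddCommGroup F] [NormedSpace ℝ F]
variable {o : M} {δ : M → F}

/-- Radial localization: for a (V*)-set, all of `Γ` is caught up to `η` by a bounded ball. -/
lemma radial_lemma (hδ : IsLipschitzFree o δ) {Γ : Set F} (hΓ : IsVStarSet Γ)
    {η : ℝ} (hη : 0 < η) :
    ∃ r : ℝ, 1 ≤ r ∧ ∀ γ ∈ Γ, ∀ g : M → ℝ, LipR 1 g → g o = 0 →
      ∀ φ : F →L[ℝ] ℝ, (∀ x, φ (δ x) = g x * (1 - plat {o} r x)) → φ γ ≤ η := by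
  by_contra hcon
  push_neg at hcon
  -- per-stage construction
  have key : ∀ r : ℝ, 1 ≤ r → ∃ (γ : F) (vfun : M → ℝ) (φv : F →L[ℝ] ℝ) (R : ℝ),
      γ ∈ Γ ∧ r + 1 ≤ R ∧ LipR 6 vfun ∧ vfun o = 0 ∧
      (∀ x, vfun x ≠ 0 → r < dist x o ∧ dist x o < 2*R) ∧
      (∀ x, φv (δ x) = vfun x) ∧ η/2 ≤ φv γ := by
    intro r hr
    obtain ⟨γ, hγΓ, g, hg, hgo, φ, hφ, hcatch⟩ := hcon r hr
    have hr0 : (0:ℝ) < r := lt_of_lt_of_le one_pos hr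
    have hgabs : ∀ x, |g x| ≤ dist x o := by
      intro x
      have := hg x o
      rw [hgo, sub_zero] at this
      simpa using this
    set w : M → ℝ := fun x => g x * (1 - plat {o} r x) with hw
    have hweq : w = fun x => g x - clampR (2*r) g x * plat {o} r x := by
      funext x
      by_cases hp : plat {o} r x = 0
      · simp [hw, hp]
      · have hd : dist x o < 2*r := by
          have := infDist_lt_of_plat_ne_zero hr0 hp
          rwa [Metric.infDist_singleton] at this
        have hb : |g x| ≤ 2*r := (hgabs x).trans (le_of_lt hd)
        rw [hw]
        simp only []
        rw [clampR_eq_of_abs_le hb]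
        ring
    have hplat01 : ∀ (s : Set M) (d : ℝ) (x : M), |plat s d x| ≤ 1 := fun s d x => by
      rw [abs_of_nonneg (plat_nonneg s d x)]; exact plat_le_one s d x
    have hwlip : LipR 4 w := by
      rw [hweq]
      have h1 : LipR (1*1 + (2*r)*(1/r)) (fun x => clampR (2*r) g x * plat {o} r x) :=
        LipR.mul (lipR_clampR hg) (fun x => clampR_abs_le (by linarith) g x)
          (lipR_plat {o} hr0) (fun x => hplat01 _ _ _)
      have h2 : (1*1 + (2*r)*(1/r)) = 3 := by field_simp; norm_num
      rw [h2] at h1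
      exact (LipR.sub hg h1).mono (by norm_num)
    have hwo : w o = 0 := by rw [hw]; simp [hgo]
    obtain ⟨Φw, hΦw_norm, hΦwl⟩ := exists_lift hδ (by norm_num) hwlip hwo
    have hφeq : φ = Φw := lift_unique hδ (fun x => by rw [hφ x, hΦwl x])
    have hcatch' : η < Φw γ := by rw [← hφeq]; exact hcatch
    have hq : (0:ℝ) < η/32 := by linarith
    obtain ⟨n, a, xp, happ⟩ := exists_approx hδ γ hq
    set μ := ∑ i, a i • δ (xp i) with hμ
    have hwμ : η - 4*(η/32) ≤ Φw μ := by
      have h1 := pair_transfer hΦw_norm happ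
      have h2 : Φw γ - Φw μ ≤ |Φw γ - Φw μ| := le_abs_self _
      linarith
    set Rsup : NNReal := Finset.univ.sup (fun i : Fin n => (⟨dist (xp i) o, dist_nonneg⟩ : NNReal))
      with hRsup
    set R : ℝ := max r (↑Rsup) + 1 with hR
    have hrR : r + 1 ≤ R := by
      rw [hR]
      have := le_max_left r (↑Rsup : ℝ)
      linarith
    have hR0 : (0:ℝ) < R := by linarith
    have hxpR : ∀ i, dist (xp i) o ≤ R := by
      intro i
      have h1 : (⟨dist (xp i) o, dist_nonneg⟩ : NNReal) ≤ Rsup := by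
        rw [hRsup]
        exact Finset.le_sup (f := fun i : Fin n => (⟨dist (xp i) o, dist_nonneg⟩ : NNReal))
          (Finset.mem_univ i)
      have h2 : dist (xp i) o ≤ (↑Rsup : ℝ) := by exact_mod_cast h1
      have h3 := le_max_right r (↑Rsup : ℝ)
      rw [hR]; linarith
    have hwbound : ∀ x, |w x| ≤ dist x o := by
      intro x
      rw [hw]
      simp only []
      rw [abs_mul]
      have h1 := hgabs x
      have h2 : |1 - plat {o} r x| ≤ 1 := by
        rw [abs_le]
        constructor
        · linarith [plat_le_one {o} r x]
        · linarith [plat_nonneg {o} r x]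
      have h3 : (0:ℝ) ≤ |g x| := abs_nonneg _
      have h4 : (0:ℝ) ≤ dist x o := dist_nonneg
      nlinarith
    set v : M → ℝ := fun x => clampR (2*R) w x * plat {o} R x with hv
    have hvlip : LipR 6 v := by
      have h1 : LipR (4*1 + (2*R)*(1/R)) v :=
        LipR.mul (lipR_clampR hwlip) (fun x => clampR_abs_le (by linarith) w x)
          (lipR_plat {o} hR0) (fun x => hplat01 _ _ _)
      have h2 : (4*1 + (2*R)*(1/R)) = 6 := by field_simp; norm_num
      rw [h2] at h1
      exact h1
    have hvo : v o = 0 := by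
      rw [hv]
      simp only []
      rw [clampR_eq_of_abs_le (by rw [hwo]; simp; linarith : |w o| ≤ 2*R), hwo, zero_mul]
    obtain ⟨Φv, hΦv_norm, hΦvl⟩ := exists_lift hδ (by norm_num) hvlip hvo
    have hveq : ∀ i, v (xp i) = w (xp i) := by
      intro i
      rw [hv]
      simp only []
      have h1 : plat {o} R (xp i) = 1 :=
        plat_eq_one hR0 (by rw [Metric.infDist_singleton]; exact hxpR i)
      have h2 : clampR (2*R) w (xp i) = w (xp i) :=
        clampR_eq_of_abs_le ((hwbound _).trans (by linarith [hxpR i]))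
      rw [h1, h2, mul_one]
    have hΦvμ : Φv μ = Φw μ := by
      rw [hμ, eval_sum hδ hΦvl, eval_sum hδ hΦwl]
      exact Finset.sum_congr rfl fun i _ => by rw [hveq i]
    have hcatchv : η/2 ≤ Φv γ := by
      have h1 := pair_transfer hΦv_norm happ
      rw [hΦvμ] at h1
      have h2 : Φw μ - Φv γ ≤ |Φv γ - Φw μ| := by
        rw [abs_sub_comm]; exact le_abs_self _
      linarith
    have hsupp : ∀ x, v x ≠ 0 → r < dist x o ∧ dist x o < 2*R := by
      intro x hx
      constructor
      · by_contra hc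
        push_neg at hc
        have h1 : plat {o} r x = 1 :=
          plat_eq_one hr0 (by rwa [Metric.infDist_singleton])
        have h2 : w x = 0 := by rw [hw]; simp only []; rw [h1]; ring
        apply hx
        rw [hv]
        simp only []
        rw [clampR_eq_of_abs_le (by rw [h2]; simp; linarith : |w x| ≤ 2*R), h2, zero_mul]
      · by_contra hc
        push_neg at hc
        have h1 : plat {o} R x = 0 := by
          apply plat_eq_zero hR0
          rw [Metric.infDist_singleton]
          linarith
        apply hx
        rw [hv]
        simp only []
        rw [h1, mul_zero]
    exact ⟨γ, v, Φv, R, hγΓ, hrR, hvlip, hvo, hsupp, hΦvl, hcatchv⟩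
  -- Skolemize
  have key' : ∀ r : ℝ, ∃ (γ : F) (vfun : M → ℝ) (φv : F →L[ℝ] ℝ) (R : ℝ),
      1 ≤ r → (γ ∈ Γ ∧ r + 1 ≤ R ∧ LipR 6 vfun ∧ vfun o = 0 ∧
      (∀ x, vfun x ≠ 0 → r < dist x o ∧ dist x o < 2*R) ∧
      (∀ x, φv (δ x) = vfun x) ∧ η/2 ≤ φv γ) := by
    intro r
    by_cases hr : 1 ≤ r
    · obtain ⟨γ, vfun, φv, R, h⟩ := key r hr
      exact ⟨γ, vfun, φv, R, fun _ => h⟩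
    · exact ⟨0, fun _ => 0, 0, 0, fun h => absurd h hr⟩
  choose γf vf φf Rf hkey using key'
  -- radius sequence
  set rs : ℕ → ℝ := fun j => Nat.rec (motive := fun _ => ℝ) 1 (fun _ r => 2 * Rf r) j with hrs
  have hrs_succ : ∀ j, rs (j+1) = 2 * Rf (rs j) := fun j => rfl
  have hrs1 : ∀ j, 1 ≤ rs j := by
    intro j
    induction j with
    | zero => exact le_refl 1
    | succ j ih =>
      have hR := (hkey (rs j) ih).2.1
      rw [hrs_succ]
      linarith
  have hrs_lt : ∀ j, rs j + 1 ≤ rs (j+1) := by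
    intro j
    have hR := (hkey (rs j) (hrs1 j)).2.1
    rw [hrs_succ]
    linarith [hrs1 j]
  have hrs_mono : Monotone rs := monotone_nat_of_le_succ (fun j => by linarith [hrs_lt j])
  -- apply the master lemma
  have hdisj : ∀ x : M, ∀ j k, vf (rs j) x ≠ 0 → vf (rs k) x ≠ 0 → j = k := by
    intro x j k hj hk
    by_contra hne
    have hwlog : ∀ j k, j < k → vf (rs j) x ≠ 0 → vf (rs k) x ≠ 0 → False := by
      intro j k hjk hj hk
      have h1 := ((hkey (rs j) (hrs1 j)).2.2.2.2.1 x hj).2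
      have h2 := ((hkey (rs k) (hrs1 k)).2.2.2.2.1 x hk).1
      have h3 : rs (j+1) ≤ rs k := hrs_mono hjk
      rw [hrs_succ] at h3
      linarith
    rcases lt_trichotomy j k with h | h | h
    · exact hwlog j k h hj hk
    · exact hne h
    · exact hwlog k j h hk hj
  exact no_disjoint_catches hδ hΓ (by linarith : (0:ℝ) < η/2) (by norm_num : (0:ℝ) ≤ 6)
    (fun j => vf (rs j)) (fun j => γf (rs j))
    (fun j => (hkey (rs j) (hrs1 j)).1)
    (fun j => (hkey (rs j) (hrs1 j)).2.2.1)
    (fun j => (hkey (rs j) (hrs1 j)).2.2.2.1)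
    hdisj
    (fun j => φf (rs j))
    (fun j => (hkey (rs j) (hrs1 j)).2.2.2.2.2.1)
    (fun j => (hkey (rs j) (hrs1 j)).2.2.2.2.2.2)

end Radial

section Level

variable {F : Type*} [NormedAddCommGroup F] [NormedSpace ℝ F]
variable {o : M} {δ : M → F}

/-- The per-level localization lemma: given the current localization weight `H`
(bounded support, values in `[0,1]`), one can localize to the `d`-neighborhood of a
finite set `N ⊇ N₀` of points, up to error `η`, uniformly over the (V*)-set `Γ`. -/
lemma level_lemma (hδ : IsLipschitzFree o δ) {Γ : Set F} (hΓ : IsVStarSet Γ)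
    {η : ℝ} (hη : 0 < η) {r : ℝ} (hr : 1 ≤ r)
    (H : M → ℝ) {ΛH : ℝ} (hΛH : 0 ≤ ΛH) (hHlip : LipR ΛH H)
    (hH0 : ∀ x, 0 ≤ H x) (hH1 : ∀ x, H x ≤ 1)
    (hHsupp : ∀ x, H x ≠ 0 → dist x o ≤ 2*r)
    {d : ℝ} (hd : 0 < d)
    (N₀ : Finset M) (hN₀ : o ∈ N₀) :
    ∃ N : Finset M, N₀ ⊆ N ∧ (∀ p ∈ N, p ∉ N₀ → H p ≠ 0) ∧
      ∀ γ ∈ Γ, ∀ g : M → ℝ, LipR 1 g → g o = 0 →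
        ∀ φ : F →L[ℝ] ℝ,
          (∀ x, φ (δ x) = g x * (H x - min (H x) (plat (↑N) d x))) → φ γ ≤ η := by
  classical
  by_contra hcon
  push_neg at hcon
  -- constants
  have hr0 : (0:ℝ) < r := lt_of_lt_of_le one_pos hr
  set Λfac : ℝ := ΛH + max ΛH (1/d) with hΛfac
  have hΛfac0 : 0 ≤ Λfac := by
    have : (0:ℝ) ≤ max ΛH (1/d) := le_trans hΛH (le_max_left _ _)
    rw [hΛfac]; linarith
  set Λw : ℝ := 1*1 + (2*r)*Λfac with hΛw
  have hΛw0 : 0 ≤ Λw := by rw [hΛw]; nlinarith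
  set Λv : ℝ := Λw*1 + (2*r)*(4/d) with hΛv
  have hΛv0 : 0 ≤ Λv := by
    have : (0:ℝ) ≤ 4/d := by positivity
    rw [hΛv]; nlinarith
  clear_value Λfac Λw Λv
  -- per-stage construction
  have key : ∀ N : Finset M, N₀ ⊆ N → (∀ p ∈ N, p ∉ N₀ → H p ≠ 0) →
      ∃ (γ : F) (vfun : M → ℝ) (φv : F →L[ℝ] ℝ) (P : Finset M),
      γ ∈ Γ ∧ P.Nonempty ∧ (∀ p ∈ P, H p ≠ 0) ∧ LipR Λv vfun ∧ vfun o = 0 ∧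
      (∀ x, vfun x ≠ 0 → infDist x (↑P : Set M) < d/2 ∧ d < infDist x (↑N : Set M)) ∧
      (∀ x, φv (δ x) = vfun x) ∧ η/2 ≤ φv γ := by
    intro N hN1 hN2
    obtain ⟨γ, hγΓ, g, hg, hgo, φ, hφ, hcatch⟩ := hcon N hN1 hN2
    have hgabs : ∀ x, |g x| ≤ dist x o := by
      intro x
      have := hg x o
      rw [hgo, sub_zero] at this
      simpa using this
    set θ : M → ℝ := plat (↑N) d with hθ
    set fac : M → ℝ := fun x => H x - min (H x) (θ x) with hfac
    have hfac0 : ∀ x, 0 ≤ fac x := by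
      intro x
      rw [hfac]
      simp only []
      have : min (H x) (θ x) ≤ H x := min_le_left _ _
      linarith
    have hfac1 : ∀ x, fac x ≤ 1 := by
      intro x
      rw [hfac]
      simp only []
      have h1 : 0 ≤ min (H x) (θ x) := le_min (hH0 x) (plat_nonneg _ _ _)
      linarith [hH1 x]
    have hfacH : ∀ x, fac x ≠ 0 → H x ≠ 0 := by
      intro x hx hH
      apply hx
      rw [hfac]
      simp only []
      rw [hH]
      have : min (0:ℝ) (θ x) = 0 := min_eq_left (plat_nonneg _ _ _)
      rw [this]
      norm_num
    have hfacθ : ∀ x, fac x ≠ 0 → d < infDist x (↑N : Set M) := by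
      intro x hx
      by_contra hc
      push_neg at hc
      apply hx
      have h1 : θ x = 1 := plat_eq_one hd hc
      rw [hfac]
      simp only []
      rw [h1, min_eq_left (hH1 x), sub_self]
    have hfaclip : LipR Λfac fac := by
      rw [hΛfac]
      have h1 : LipR (max ΛH (1/d)) (fun x => min (H x) (θ x)) :=
        LipR.min hHlip (by rw [hθ]; exact lipR_plat _ hd)
      exact LipR.sub hHlip h1
    set w : M → ℝ := fun x => clampR (2*r) g x * fac x with hw
    have hwg : ∀ x, w x = g x * fac x := by
      intro x
      rw [hw]
      simp only []
      by_cases hx : fac x = 0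
      · rw [hx, mul_zero, mul_zero]
      · have h1 : dist x o ≤ 2*r := hHsupp x (hfacH x hx)
        rw [clampR_eq_of_abs_le ((hgabs x).trans h1)]
    have hwlip : LipR Λw w := by
      rw [hΛw, hw]
      exact LipR.mul (lipR_clampR hg) (fun x => clampR_abs_le (by linarith) g x)
        hfaclip (fun x => by rw [abs_of_nonneg (hfac0 x)]; exact hfac1 x)
    have hwabs : ∀ x, |w x| ≤ 2*r := by
      intro x
      rw [hw]
      simp only []
      rw [abs_mul]
      have h1 := clampR_abs_le (by linarith : (0:ℝ) ≤ 2*r) g x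
      have h2 : |fac x| ≤ 1 := by rw [abs_of_nonneg (hfac0 x)]; exact hfac1 x
      have h3 : (0:ℝ) ≤ |clampR (2*r) g x| := abs_nonneg _
      nlinarith
    have hwo : w o = 0 := by
      rw [hw]
      simp only []
      rw [clampR_eq_of_abs_le (by rw [hgo]; simp; linarith : |g o| ≤ 2*r), hgo, zero_mul]
    obtain ⟨Φw, hΦw_norm, hΦwl⟩ := exists_lift hδ hΛw0 hwlip hwo
    have hφeq : φ = Φw := lift_unique hδ (fun x => by rw [hφ x, hΦwl x, hwg x])
    have hcatch' : η < Φw γ := by rw [← hφeq]; exact hcatch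
    -- approximation
    have hD : (0:ℝ) < 4*(Λw + Λv + 1) := by linarith
    obtain ⟨q, hq0, hqw, hqv⟩ : ∃ q : ℝ, 0 < q ∧ Λw * q ≤ η/4 ∧ Λv * q ≤ η/4 := by
      refine ⟨η/(4*(Λw + Λv + 1)), div_pos hη hD, ?_, ?_⟩
      · rw [← mul_div_assoc, div_le_div_iff₀ hD (by norm_num : (0:ℝ) < 4)]
        nlinarith
      · rw [← mul_div_assoc, div_le_div_iff₀ hD (by norm_num : (0:ℝ) < 4)]
        nlinarith
    obtain ⟨n, a, xp, happ⟩ := exists_approx hδ γ hq0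
    set μ := ∑ i, a i • δ (xp i) with hμ
    have hwμ : η - η/4 ≤ Φw μ := by
      have h1 := pair_transfer hΦw_norm happ
      have h2 : Φw γ - Φw μ ≤ |Φw γ - Φw μ| := le_abs_self _
      linarith
    -- the catch points
    classical
    set P : Finset M := Finset.image xp (Finset.univ.filter (fun i => w (xp i) ≠ 0)) with hP
    have hPmem : ∀ i : Fin n, w (xp i) ≠ 0 → xp i ∈ P := by
      intro i hi
      rw [hP]
      exact Finset.mem_image.2 ⟨i, Finset.mem_filter.2 ⟨Finset.mem_univ i, hi⟩, rfl⟩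
    have hPH : ∀ p ∈ P, H p ≠ 0 := by
      intro p hp
      rw [hP] at hp
      obtain ⟨i, hi, rfl⟩ := Finset.mem_image.1 hp
      have := (Finset.mem_filter.1 hi).2
      have hfc : fac (xp i) ≠ 0 := by
        intro h0
        apply this
        rw [hwg, h0, mul_zero]
      exact hfacH _ hfc
    set ψ : M → ℝ := plat (↑P) (d/4) with hψ
    set v : M → ℝ := fun x => w x * ψ x with hv
    have hvlip : LipR Λv v := by
      rw [hΛv, hv]
      refine LipR.mul hwlip hwabs ?_ (fun x => by
        rw [abs_of_nonneg (plat_nonneg _ _ _)]; exact plat_le_one _ _ _)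
      have : (4:ℝ)/d = 1/(d/4) := by field_simp
      rw [this, hψ]
      exact lipR_plat _ (by linarith)
    have hvo : v o = 0 := by rw [hv]; simp only []; rw [hwo, zero_mul]
    obtain ⟨Φv, hΦv_norm, hΦvl⟩ := exists_lift hδ hΛv0 hvlip hvo
    have hveq : ∀ i, v (xp i) = w (xp i) := by
      intro i
      by_cases hi : w (xp i) = 0
      · rw [hv]; simp only []; rw [hi, zero_mul]
      · have h1 : ψ (xp i) = 1 := by
          rw [hψ]
          refine plat_eq_one (by linarith) ?_
          rw [infDist_zero_of_mem (Finset.mem_coe.2 (hPmem i hi))]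
          linarith
        rw [hv]; simp only []; rw [h1, mul_one]
    have hΦvμ : Φv μ = Φw μ := by
      rw [hμ, eval_sum hδ hΦvl, eval_sum hδ hΦwl]
      exact Finset.sum_congr rfl fun i _ => by rw [hveq i]
    have hcatchv : η/2 ≤ Φv γ := by
      have h1 := pair_transfer hΦv_norm happ
      rw [hΦvμ] at h1
      have h2 : Φw μ - Φv γ ≤ |Φv γ - Φw μ| := by
        rw [abs_sub_comm]; exact le_abs_self _
      linarith
    have hPne : P.Nonempty := by
      rw [Finset.nonempty_iff_ne_empty]
      intro hPe
      have hall : ∀ i : Fin n, w (xp i) = 0 := by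
        intro i
        by_contra hi
        have := hPmem i hi
        rw [hPe] at this
        exact absurd this (Finset.notMem_empty _)
      have : Φw μ = 0 := by
        rw [hμ, eval_sum hδ hΦwl]
        exact Finset.sum_eq_zero fun i _ => by rw [hall i, mul_zero]
      rw [this] at hwμ
      linarith
    have hsupp : ∀ x, v x ≠ 0 →
        infDist x (↑P : Set M) < d/2 ∧ d < infDist x (↑N : Set M) := by
      intro x hx
      have hwx : w x ≠ 0 := by
        intro h0; apply hx; rw [hv]; simp only []; rw [h0, zero_mul]
      have hψx : ψ x ≠ 0 := by
        intro h0; apply hx; rw [hv]; simp only []; rw [h0, mul_zero]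
      constructor
      · have := infDist_lt_of_plat_ne_zero (by linarith : (0:ℝ) < d/4) (by rw [hψ] at hψx; exact hψx)
        linarith
      · have hfc : fac x ≠ 0 := by
          intro h0
          apply hwx
          rw [hwg, h0, mul_zero]
        exact hfacθ x hfc
    exact ⟨γ, v, Φv, P, hγΓ, hPne, hPH, hvlip, hvo, hsupp, hΦvl, hcatchv⟩
  -- Skolemize
  have key' : ∀ N : Finset M, ∃ (γ : F) (vfun : M → ℝ) (φv : F →L[ℝ] ℝ) (P : Finset M),
      N₀ ⊆ N → (∀ p ∈ N, p ∉ N₀ → H p ≠ 0) →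
      (γ ∈ Γ ∧ P.Nonempty ∧ (∀ p ∈ P, H p ≠ 0) ∧ LipR Λv vfun ∧ vfun o = 0 ∧
      (∀ x, vfun x ≠ 0 → infDist x (↑P : Set M) < d/2 ∧ d < infDist x (↑N : Set M)) ∧
      (∀ x, φv (δ x) = vfun x) ∧ η/2 ≤ φv γ) := by
    intro N
    by_cases h1 : N₀ ⊆ N
    · by_cases h2 : ∀ p ∈ N, p ∉ N₀ → H p ≠ 0
      · obtain ⟨γ, vfun, φv, P, h⟩ := key N h1 h2
        exact ⟨γ, vfun, φv, P, fun _ _ => h⟩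
      · exact ⟨0, fun _ => 0, 0, ∅, fun _ h => absurd h h2⟩
    · exact ⟨0, fun _ => 0, 0, ∅, fun h _ => absurd h h1⟩
  choose γf vf φf Pf hkey using key'
  -- the nested finite sets
  set Ns : ℕ → Finset M := fun j => Nat.rec N₀ (fun _ Nj => Nj ∪ Pf Nj) j with hNs
  have hNs_succ : ∀ j, Ns (j+1) = Ns j ∪ Pf (Ns j) := fun j => rfl
  have hc1 : ∀ j, N₀ ⊆ Ns j := by
    intro j
    induction j with
    | zero => exact Finset.Subset.refl _
    | succ j ih =>
      rw [hNs_succ]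
      exact ih.trans Finset.subset_union_left
  have hc2 : ∀ j, ∀ p ∈ Ns j, p ∉ N₀ → H p ≠ 0 := by
    intro j
    induction j with
    | zero => intro p hp hp'; exact absurd hp hp'
    | succ j ih =>
      intro p hp hp'
      rw [hNs_succ] at hp
      rcases Finset.mem_union.1 hp with h | h
      · exact ih p h hp'
      · exact ((hkey (Ns j) (hc1 j) ih).2.2.1) p h
  have hmono : ∀ j k, j ≤ k → Ns j ⊆ Ns k := by
    intro j k hjk
    induction k with
    | zero =>
      have : j = 0 := Nat.le_zero.1 hjk
      rw [this]
    | succ k ih =>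
      rcases Nat.lt_or_ge j (k+1) with h | h
      · have := ih (Nat.lt_succ_iff.1 h)
        rw [hNs_succ]
        exact this.trans Finset.subset_union_left
      · have : j = k + 1 := le_antisymm hjk h
        rw [this]
  have hdata : ∀ j, γf (Ns j) ∈ Γ ∧ (Pf (Ns j)).Nonempty ∧ (∀ p ∈ Pf (Ns j), H p ≠ 0) ∧
      LipR Λv (vf (Ns j)) ∧ vf (Ns j) o = 0 ∧
      (∀ x, vf (Ns j) x ≠ 0 → infDist x (↑(Pf (Ns j)) : Set M) < d/2
        ∧ d < infDist x (↑(Ns j) : Set M)) ∧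
      (∀ x, φf (Ns j) (δ x) = vf (Ns j) x) ∧ η/2 ≤ φf (Ns j) (γf (Ns j)) :=
    fun j => hkey (Ns j) (hc1 j) (hc2 j)
  have hdisj : ∀ x : M, ∀ j k, vf (Ns j) x ≠ 0 → vf (Ns k) x ≠ 0 → j = k := by
    intro x j k hj hk
    by_contra hne
    have hwlog : ∀ j k, j < k → vf (Ns j) x ≠ 0 → vf (Ns k) x ≠ 0 → False := by
      intro j k hjk hj hk
      have h1 := ((hdata j).2.2.2.2.2.1 x hj).1
      have h2 := ((hdata k).2.2.2.2.2.1 x hk).2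
      have hsub : (↑(Pf (Ns j)) : Set M) ⊆ (↑(Ns k) : Set M) := by
        have hsub1 : Pf (Ns j) ⊆ Ns (j+1) := by
          rw [hNs_succ]; exact Finset.subset_union_right
        have hsub2 : Ns (j+1) ⊆ Ns k := hmono _ _ hjk
        intro p hp
        exact Finset.mem_coe.2 (hsub2 (hsub1 (Finset.mem_coe.1 hp)))
      have hne' : (↑(Pf (Ns j)) : Set M).Nonempty := by
        obtain ⟨p, hp⟩ := (hdata j).2.1
        exact ⟨p, Finset.mem_coe.2 hp⟩
      have h3 : infDist x (↑(Ns k) : Set M) ≤ infDist x (↑(Pf (Ns j)) : Set M) :=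
        infDist_le_infDist_of_subset hsub hne'
      linarith
    rcases lt_trichotomy j k with h | h | h
    · exact hwlog j k h hj hk
    · exact hne h
    · exact hwlog k j h hk hj
  exact no_disjoint_catches hδ hΓ (by linarith : (0:ℝ) < η/2) hΛv0
    (fun j => vf (Ns j)) (fun j => γf (Ns j))
    (fun j => (hdata j).1)
    (fun j => (hdata j).2.2.2.1)
    (fun j => (hdata j).2.2.2.2.1)
    hdisj
    (fun j => φf (Ns j))
    (fun j => (hdata j).2.2.2.2.2.2.1)
    (fun j => (hdata j).2.2.2.2.2.2.2)

end Level

end VStarAux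

/-- **(V*)-sets in Lipschitz-free spaces are tight**: if `Γ ⊆ F(M)` is a (V*)-set with
respect to `F(M)`, then for every `ε > 0` there is a compact `K ⊆ M` containing the base
point such that `Γ ⊆ F(K) + ε B_{F(M)}`. -/
theorem vStarSet_tight
    {M : Type*} [MetricSpace M] [CompleteSpace M] (o : M)
    {F : Type*} [NormedAddCommGroup F] [NormedSpace ℝ F] [CompleteSpace F]
    (δ : M → F) (hδ : IsLipschitzFree o δ)
    (Γ : Set F) (hΓ : IsVStarSet Γ) :
    ∀ ε > (0 : ℝ), ∃ K : Set M, IsCompact K ∧ o ∈ K ∧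
      ∀ γ ∈ Γ, ∃ z ∈ freeSpan δ K, ‖γ - z‖ ≤ ε := by
  classical
  intro ε hε
  open VStarAux in
  -- scale and budget sequences (kept opaque)
  obtain ⟨dk, hdk, hdk2⟩ : ∃ dk : ℕ → ℝ, (∀ k, 0 < dk k) ∧ (∀ e : ℝ, 0 < e → ∃ k, 2 * dk k < e) := by
    refine ⟨fun k => (1/2)^(k+1), fun k => by positivity, ?_⟩
    intro e he
    obtain ⟨n, hn⟩ := exists_pow_lt_of_lt_one he (by norm_num : (1/2:ℝ) < 1)
    refine ⟨n, ?_⟩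
    have : 2 * (1/2:ℝ)^(n+1) = (1/2)^n := by ring
    rw [this]
    exact hn
  obtain ⟨ek, hek, hek_sum⟩ : ∃ ek : ℕ → ℝ, (∀ k, 0 < ek k) ∧
      (∀ m, ∑ j ∈ Finset.range m, ek j ≤ ε/8) := by
    refine ⟨fun k => ε/8 * (1/2)^(k+1), fun k => by positivity, ?_⟩
    intro m
    have h1 : ∑ j ∈ Finset.range m, ε/8 * (1/2:ℝ)^(j+1)
        = ε/8 * ∑ j ∈ Finset.range m, (1/2:ℝ)^(j+1) := by
      rw [Finset.mul_sum]
    have h2 : ∑ j ∈ Finset.range m, (1/2:ℝ)^(j+1)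
        = (1/2) * ∑ j ∈ Finset.range m, (1/2:ℝ)^j := by
      rw [Finset.mul_sum]
      exact Finset.sum_congr rfl fun j _ => by ring
    have h3 : ∑ j ∈ Finset.range m, (1/2:ℝ)^j ≤ 2 := sum_geometric_two_le m
    rw [h1, h2]
    nlinarith
  -- radial step
  obtain ⟨r, hr1, hInv0⟩ := radial_lemma hδ hΓ (by positivity : (0:ℝ) < ε/8)
  have hr0 : (0:ℝ) < r := lt_of_lt_of_le one_pos hr1
  -- the choice step for levels
  have stepEx : ∀ (k : ℕ) (N₀ : Finset M) (H : M → ℝ), ∃ N : Finset M,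
      (o ∈ N₀ ∧ (∃ ΛH, 0 ≤ ΛH ∧ LipR ΛH H) ∧ (∀ x, 0 ≤ H x) ∧ (∀ x, H x ≤ 1) ∧
        (∀ x, H x ≠ 0 → dist x o ≤ 2*r)) →
      (N₀ ⊆ N ∧ (∀ p ∈ N, p ∉ N₀ → H p ≠ 0) ∧
        ∀ γ ∈ Γ, ∀ g : M → ℝ, LipR 1 g → g o = 0 → ∀ φ : F →L[ℝ] ℝ,
          (∀ x, φ (δ x) = g x * (H x - min (H x) (plat (↑N) (dk k) x))) → φ γ ≤ ek k) := by
    intro k N₀ H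
    by_cases hyp : o ∈ N₀ ∧ (∃ ΛH, 0 ≤ ΛH ∧ LipR ΛH H) ∧ (∀ x, 0 ≤ H x) ∧ (∀ x, H x ≤ 1) ∧
        (∀ x, H x ≠ 0 → dist x o ≤ 2*r)
    · obtain ⟨h1, ⟨ΛH, hΛH0, hΛHlip⟩, h3, h4, h5⟩ := hyp
      obtain ⟨N, hN⟩ := level_lemma hδ hΓ (hek k) hr1 H hΛH0 hΛHlip h3 h4 h5 (hdk k) N₀ h1
      exact ⟨N, fun _ => hN⟩
    · exact ⟨N₀, fun h => absurd h hyp⟩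
  choose nextN hnextN using stepEx
  -- the recursion
  set St : ℕ → Finset M × (M → ℝ) := fun k => Nat.rec ({o}, plat {o} r)
      (fun k S => (nextN k S.1 S.2,
        fun x => min (S.2 x) (plat (↑(nextN k S.1 S.2) : Set M) (dk k) x))) k with hSt
  set Hh : ℕ → M → ℝ := fun k => (St k).2 with hHh
  set NN : ℕ → Finset M := fun k => (St (k+1)).1 with hNN
  have hHh0 : Hh 0 = plat {o} r := rfl
  have hNNeq : ∀ k, NN k = nextN k (St k).1 (Hh k) := fun k => rfl
  have hHhsucc : ∀ k, Hh (k+1) = fun x => min (Hh k x) (plat (↑(NN k) : Set M) (dk k) x) :=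
    fun k => rfl
  -- state invariant
  have GInv : ∀ k, o ∈ (St k).1 ∧ (∃ Λ, 0 ≤ Λ ∧ LipR Λ (Hh k)) ∧ (∀ x, 0 ≤ Hh k x) ∧
      (∀ x, Hh k x ≤ 1) ∧ (∀ x, Hh k x ≠ 0 → dist x o ≤ 2*r) := by
    intro k
    induction k with
    | zero =>
      refine ⟨Finset.mem_singleton_self o, ⟨1/r, by positivity, ?_⟩, ?_, ?_, ?_⟩
      · rw [hHh0]; exact lipR_plat _ hr0
      · intro x; rw [hHh0]; exact plat_nonneg _ _ _
      · intro x; rw [hHh0]; exact plat_le_one _ _ _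
      · intro x hx
        rw [hHh0] at hx
        have := infDist_lt_of_plat_ne_zero hr0 hx
        rw [Metric.infDist_singleton] at this
        linarith
    | succ k ih =>
      obtain ⟨ho, ⟨Λ, hΛ0, hΛ⟩, h3, h4, h5⟩ := ih
      have hstep := hnextN k (St k).1 (Hh k) ⟨ho, ⟨Λ, hΛ0, hΛ⟩, h3, h4, h5⟩
      have hoN : o ∈ (St (k+1)).1 := by
        have : (St (k+1)).1 = nextN k (St k).1 (Hh k) := rfl
        rw [this]
        exact hstep.1 ho
      refine ⟨hoN, ⟨max Λ (1/(dk k)), ?_, ?_⟩, ?_, ?_, ?_⟩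
      · exact le_trans hΛ0 (le_max_left _ _)
      · rw [hHhsucc]
        exact LipR.min hΛ (lipR_plat _ (hdk k))
      · intro x
        rw [hHhsucc]
        exact le_min (h3 x) (plat_nonneg _ _ _)
      · intro x
        rw [hHhsucc]
        exact (min_le_left _ _).trans (h4 x)
      · intro x hx
        rw [hHhsucc] at hx
        apply h5
        intro h0
        apply hx
        simp only [h0]
        exact min_eq_left (plat_nonneg _ _ _)
  have hlevel : ∀ k, (St k).1 ⊆ NN k ∧ (∀ p ∈ NN k, p ∉ (St k).1 → Hh k p ≠ 0) ∧
      (∀ γ ∈ Γ, ∀ g : M → ℝ, LipR 1 g → g o = 0 → ∀ φ : F →L[ℝ] ℝ,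
        (∀ x, φ (δ x) = g x * (Hh k x - min (Hh k x) (plat (↑(NN k)) (dk k) x))) → φ γ ≤ ek k) :=
    fun k => hnextN k (St k).1 (Hh k) (GInv k)
  -- basic facts about the nets
  have hprev : ∀ k, (St (k+1)).1 = NN k := fun k => rfl
  have hNNmono : ∀ k, NN k ⊆ NN (k+1) := by
    intro k
    have h1 : (St (k+1)).1 ⊆ NN (k+1) := (hlevel (k+1)).1
    rw [hprev] at h1
    exact h1
  have hNNmono' : ∀ j k, j ≤ k → NN j ⊆ NN k := by
    intro j k hjk
    induction k with
    | zero =>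
      have : j = 0 := Nat.le_zero.1 hjk
      rw [this]
    | succ k ih =>
      rcases Nat.lt_or_ge j (k+1) with h | h
      · exact (ih (Nat.lt_succ_iff.1 h)).trans (hNNmono k)
      · have : j = k + 1 := le_antisymm hjk h
        rw [this]
  have hoNN : ∀ k, o ∈ NN k := fun k => (GInv (k+1)).1
  -- positivity structure of Hh
  have hHh_pos_facts : ∀ k x, Hh k x ≠ 0 →
      (dist x o ≤ 2*r ∧ ∀ j, j < k → infDist x (↑(NN j) : Set M) ≤ 2 * dk j) := by
    intro k
    induction k with
    | zero =>
      intro x hx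
      exact ⟨(GInv 0).2.2.2.2 x hx, fun j hj => absurd hj (Nat.not_lt_zero j)⟩
    | succ k ih =>
      intro x hx
      rw [hHhsucc] at hx
      have hmin : min (Hh k x) (plat (↑(NN k) : Set M) (dk k) x) ≠ 0 := hx
      have hH : Hh k x ≠ 0 := by
        intro h0
        apply hmin
        rw [h0]
        exact min_eq_left (plat_nonneg _ _ _)
      have hθ : plat (↑(NN k) : Set M) (dk k) x ≠ 0 := by
        intro h0
        apply hmin
        rw [h0]
        exact min_eq_right ((GInv k).2.2.1 x)
      obtain ⟨hd, hpast⟩ := ih x hH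
      refine ⟨hd, fun j hj => ?_⟩
      rcases Nat.lt_or_ge j k with h | h
      · exact hpast j h
      · have : j = k := le_antisymm (Nat.lt_succ_iff.1 hj) h
        rw [this]
        have := infDist_lt_of_plat_ne_zero (hdk k) hθ
        linarith
  -- the compact set
  set K : Set M := {x | dist x o ≤ 2*r ∧ ∀ k, infDist x (↑(NN k) : Set M) ≤ 2 * dk k}
    with hK
  have hoK : o ∈ K := by
    rw [hK]
    refine ⟨by simp [dist_self]; linarith, fun k => ?_⟩
    rw [infDist_zero_of_mem (Finset.mem_coe.2 (hoNN k))]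
    linarith [hdk k]
  have hKclosed : IsClosed K := by
    have h1 : K = {x | dist x o ≤ 2*r} ∩ ⋂ k, {x | infDist x (↑(NN k) : Set M) ≤ 2 * dk k} := by
      rw [hK]
      ext x
      simp only [Set.mem_setOf_eq, Set.mem_inter_iff, Set.mem_iInter]
    rw [h1]
    refine IsClosed.inter ?_ (isClosed_iInter fun k => ?_)
    · exact isClosed_le (continuous_id.dist continuous_const) continuous_const
    · exact isClosed_le (continuous_infDist_pt _) continuous_const
  have hKtb : TotallyBounded K := by
    rw [totallyBounded_iff]
    intro e he
    obtain ⟨k, hk⟩ := hdk2 e he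
    refine ⟨↑(NN k), (NN k).finite_toSet, ?_⟩
    intro x hx
    rw [hK] at hx
    have h1 : infDist x (↑(NN k) : Set M) ≤ 2 * dk k := hx.2 k
    have h2 : infDist x (↑(NN k) : Set M) < e := lt_of_le_of_lt h1 hk
    obtain ⟨y, hy, hxy⟩ := (Metric.infDist_lt_iff ⟨o, Finset.mem_coe.2 (hoNN k)⟩).1 h2
    exact Set.mem_biUnion hy (Metric.mem_ball'.2 (by rwa [dist_comm] at hxy))
  have hKcompact : IsCompact K := hKtb.isCompact_of_isClosed hKclosed
  -- net points belong to K
  have hNNK : ∀ k, (↑(NN k) : Set M) ⊆ K := by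
    intro k
    induction k with
    | zero =>
      intro p hp
      by_cases hpo : p ∈ (St 0).1
      · have : p = o := Finset.mem_singleton.1 hpo
        rw [this]; exact hoK
      · have hH := (hlevel 0).2.1 p (Finset.mem_coe.1 hp) hpo
        obtain ⟨hd, _⟩ := hHh_pos_facts 0 p hH
        rw [hK]
        refine ⟨hd, fun j => ?_⟩
        have hsub : NN 0 ⊆ NN j := hNNmono' 0 j (Nat.zero_le j)
        rw [infDist_zero_of_mem (Finset.mem_coe.2 (hsub (Finset.mem_coe.1 hp)))]
        linarith [hdk j]
    | succ k ih =>
      intro p hp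
      by_cases hpo : p ∈ (St (k+1)).1
      · exact ih (by rw [← hprev k]; exact Finset.mem_coe.2 hpo)
      · have hH := (hlevel (k+1)).2.1 p (Finset.mem_coe.1 hp) hpo
        obtain ⟨hd, hpast⟩ := hHh_pos_facts (k+1) p hH
        rw [hK]
        refine ⟨hd, fun j => ?_⟩
        rcases Nat.lt_or_ge j (k+1) with h | h
        · exact hpast j h
        · have hsub : NN (k+1) ⊆ NN j := hNNmono' (k+1) j h
          rw [infDist_zero_of_mem (Finset.mem_coe.2 (hsub (Finset.mem_coe.1 hp)))]
          linarith [hdk j]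
  -- the key uniform Lipschitz estimate for `f · Hh k`, `f` vanishing on `K`
  have hfactor : ∀ (f : M → ℝ), LipR 1 f → (∀ p ∈ K, f p = 0) →
      ∀ (s : Set M), s.Nonempty → s ⊆ K → ∀ d : ℝ, 0 < d → ∀ x y : M,
      |f x| * |plat s d x - plat s d y| ≤ 3 * dist x y := by
    intro f hf hfK s hs hsK d hd x y
    have hfabs : ∀ z : M, |f z| ≤ infDist z s := by
      intro z
      by_contra hlt
      push_neg at hlt
      obtain ⟨p, hp, hdp⟩ := (infDist_lt_iff hs).1 hlt
      have h0 : f p = 0 := hfK p (hsK hp)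
      have h1 := hf z p
      rw [h0, sub_zero, one_mul] at h1
      have h2 : dist z p ≤ dist z p := le_refl _
      linarith
    by_cases hcase : infDist x s ≤ 2*d + dist x y
    · have h2 : |f x| ≤ 2*d + dist x y := (hfabs x).trans hcase
      by_cases hd2 : dist x y ≤ d
      · have h1 : |plat s d x - plat s d y| ≤ (1/d) * dist x y := lipR_plat s hd x y
        calc |f x| * |plat s d x - plat s d y| ≤ (2*d + dist x y) * ((1/d) * dist x y) :=
              mul_le_mul h2 h1 (abs_nonneg _) (by linarith [dist_nonneg (x := x) (y := y)])
          _ ≤ 3 * dist x y := by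
              have hdist0 : (0:ℝ) ≤ dist x y := dist_nonneg
              rw [div_mul_eq_mul_div, one_mul, ← mul_div_assoc, div_le_iff₀ hd]
              nlinarith
      · push_neg at hd2
        have h4 : |plat s d x - plat s d y| ≤ 1 := by
          have p1 := plat_nonneg s d x; have p2 := plat_le_one s d x
          have p3 := plat_nonneg s d y; have p4 := plat_le_one s d y
          rw [abs_le]; constructor <;> [linarith; linarith]
        calc |f x| * |plat s d x - plat s d y| ≤ (2*d + dist x y) * 1 :=
              mul_le_mul h2 h4 (abs_nonneg _) (by linarith [dist_nonneg (x := x) (y := y)])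
          _ ≤ 3 * dist x y := by linarith
    · push_neg at hcase
      have hdist0 : (0:ℝ) ≤ dist x y := dist_nonneg
      have h1 : plat s d x = 0 := plat_eq_zero hd (by linarith)
      have h2 : plat s d y = 0 := by
        apply plat_eq_zero hd
        have := abs_infDist_sub_le s x y
        rw [abs_le] at this
        linarith [this.1]
      rw [h1, h2, sub_zero, abs_zero, mul_zero]
      linarith
  have hfH : ∀ (f : M → ℝ), LipR 1 f → (∀ p ∈ K, f p = 0) → ∀ k, ∀ x y : M,
      |f x| * |Hh k x - Hh k y| ≤ 3 * dist x y := by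
    intro f hf hfK k
    induction k with
    | zero =>
      intro x y
      rw [hHh0]
      refine hfactor f hf hfK {o} ⟨o, rfl⟩ ?_ r hr0 x y
      intro p hp
      rw [Set.mem_singleton_iff] at hp
      rw [hp]; exact hoK
    | succ k ih =>
      intro x y
      rw [hHhsucc]
      have h1 := abs_min_sub_min (Hh k x) (plat (↑(NN k) : Set M) (dk k) x)
        (Hh k y) (plat (↑(NN k) : Set M) (dk k) y)
      have h2 := ih x y
      have h3 := hfactor f hf hfK (↑(NN k) : Set M) ⟨o, Finset.mem_coe.2 (hoNN k)⟩
        (hNNK k) (dk k) (hdk k) x y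
      calc |f x| * |min (Hh k x) (plat (↑(NN k) : Set M) (dk k) x)
            - min (Hh k y) (plat (↑(NN k) : Set M) (dk k) y)|
          ≤ |f x| * max |Hh k x - Hh k y|
              |plat (↑(NN k) : Set M) (dk k) x - plat (↑(NN k) : Set M) (dk k) y| :=
            mul_le_mul_of_nonneg_left h1 (abs_nonneg _)
        _ = max (|f x| * |Hh k x - Hh k y|)
              (|f x| * |plat (↑(NN k) : Set M) (dk k) x - plat (↑(NN k) : Set M) (dk k) y|) :=
            mul_max_of_nonneg _ _ (abs_nonneg _)
        _ ≤ 3 * dist x y := max_le h2 h3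
  have hfHlip : ∀ (f : M → ℝ), LipR 1 f → (∀ p ∈ K, f p = 0) → ∀ k,
      LipR 4 (fun x => f x * Hh k x) := by
    intro f hf hfK k x y
    have h1 := hfH f hf hfK k x y
    have h2 := hf x y
    have key : f x * Hh k x - f y * Hh k y
        = f x * (Hh k x - Hh k y) + Hh k y * (f x - f y) := by ring
    calc |f x * Hh k x - f y * Hh k y|
        ≤ |f x * (Hh k x - Hh k y)| + |Hh k y * (f x - f y)| := by
          rw [key]; exact abs_add_le _ _
      _ = |f x| * |Hh k x - Hh k y| + |Hh k y| * |f x - f y| := by rw [abs_mul, abs_mul]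
      _ ≤ 4 * dist x y := by
          have hH0 := (GInv k).2.2.1 y
          have hH1 := (GInv k).2.2.2.1 y
          have h4 : |Hh k y| ≤ 1 := by rw [abs_of_nonneg hH0]; exact hH1
          have h5 : (0:ℝ) ≤ |f x - f y| := abs_nonneg _
          nlinarith
  -- the final pairing bound
  have hfinal : ∀ γ ∈ Γ, ∀ φ : F →L[ℝ] ℝ, ‖φ‖ ≤ 1 → (∀ x ∈ K, φ (δ x) = 0) → φ γ ≤ ε/4 := by
    intro γ hγ φ hφnorm hφK
    set f : M → ℝ := fun x => φ (δ x) with hf_def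
    have hflip : LipR 1 f := by
      intro x y
      have h1 : f x - f y = φ (δ x - δ y) := by rw [hf_def]; simp only []; rw [map_sub]
      rw [h1]
      calc |φ (δ x - δ y)| ≤ ‖φ‖ * ‖δ x - δ y‖ := φ.le_opNorm _
        _ ≤ 1 * dist x y := by
            have h2 : ‖δ x - δ y‖ = dist x y := by
              rw [← dist_eq_norm]
              exact hδ.isometry.dist_eq x y
            rw [h2]
            have := dist_nonneg (x := x) (y := y)
            nlinarith
    have hfo : f o = 0 := by rw [hf_def]; simp only []; rw [hδ.map_base, map_zero]
    have hfK : ∀ p ∈ K, f p = 0 := hφK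
    obtain ⟨Φ0, hΦ0n, hΦ0l⟩ : ∃ Φ0 : F →L[ℝ] ℝ, ‖Φ0‖ ≤ 5 ∧
        ∀ x, Φ0 (δ x) = f x * (1 - Hh 0 x) := by
      refine exists_lift hδ (by norm_num) ?_ (by rw [hfo, zero_mul])
      have h2 : (fun x => f x * (1 - Hh 0 x)) = fun x => f x - f x * Hh 0 x := by
        funext x; ring
      rw [h2]
      have := LipR.sub hflip (hfHlip f hflip hfK 0)
      exact this.mono (by norm_num)
    have hΨex : ∀ j, ∃ Ψ : F →L[ℝ] ℝ, ‖Ψ‖ ≤ 8 ∧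
        ∀ x, Ψ (δ x) = f x * (Hh j x - Hh (j+1) x) := by
      intro j
      refine exists_lift hδ (by norm_num) ?_ (by rw [hfo, zero_mul])
      have h3 : (fun x => f x * (Hh j x - Hh (j+1) x))
          = fun x => (f x * Hh j x) - (f x * Hh (j+1) x) := by funext x; ring
      rw [h3]
      exact (LipR.sub (hfHlip f hflip hfK j) (hfHlip f hflip hfK (j+1))).mono (by norm_num)
    choose Ψ hΨn hΨl using hΨex
    have hΦkex : ∀ k, ∃ Φk : F →L[ℝ] ℝ, ‖Φk‖ ≤ 4 ∧ ∀ x, Φk (δ x) = f x * Hh k x :=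
      fun k => exists_lift hδ (by norm_num) (hfHlip f hflip hfK k)
        (show f o * Hh k o = 0 by rw [hfo, zero_mul])
    choose Φk hΦkn hΦkl using hΦkex
    have htel : ∀ k, φ γ ≤ ε/4 + Φk k γ := by
      intro k
      have heq : φ = Φ0 + (∑ j ∈ Finset.range k, Ψ j) + Φk k := by
        apply lift_unique hδ
        intro x
        have h1 : (Φ0 + (∑ j ∈ Finset.range k, Ψ j) + Φk k) (δ x)
            = f x * (1 - Hh 0 x)
              + (∑ j ∈ Finset.range k, f x * (Hh j x - Hh (j+1) x)) + f x * Hh k x := by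
          rw [ContinuousLinearMap.add_apply, ContinuousLinearMap.add_apply,
            ContinuousLinearMap.sum_apply, hΦ0l, hΦkl]
          congr 1
          congr 1
          exact Finset.sum_congr rfl fun j _ => hΨl j x
        rw [h1]
        have h2 : ∑ j ∈ Finset.range k, f x * (Hh j x - Hh (j+1) x)
            = f x * (Hh 0 x - Hh k x) := by
          rw [← Finset.mul_sum, Finset.sum_range_sub' (fun j => Hh j x) k]
        rw [h2]
        have hfx : φ (δ x) = f x := rfl
        rw [hfx]
        ring
      have h3 : φ γ = Φ0 γ + (∑ j ∈ Finset.range k, Ψ j γ) + Φk k γ := by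
        rw [heq, ContinuousLinearMap.add_apply, ContinuousLinearMap.add_apply,
          ContinuousLinearMap.sum_apply]
      have hval0 : Φ0 γ ≤ ε/8 := hInv0 γ hγ f hflip hfo Φ0 hΦ0l
      have hvalj : ∀ j, Ψ j γ ≤ ek j := by
        intro j
        apply (hlevel j).2.2 γ hγ f hflip hfo (Ψ j)
        intro x
        rw [hΨl j x]
      have h5 : ∑ j ∈ Finset.range k, Ψ j γ ≤ ∑ j ∈ Finset.range k, ek j :=
        Finset.sum_le_sum fun j _ => hvalj j
      have h6 := hek_sum k
      rw [h3]
      linarith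
    have hlimit : ∀ ρ : ℝ, 0 < ρ → ∃ k, Φk k γ ≤ ρ := by
      intro ρ hρ
      obtain ⟨n, a, xp, happ⟩ := exists_approx hδ γ (show (0:ℝ) < ρ/8 by linarith)
      have hdeath : ∀ i : Fin n, ∃ k0, ∀ k, k0 ≤ k → f (xp i) * Hh k (xp i) = 0 := by
        intro i
        by_cases hiK : xp i ∈ K
        · exact ⟨0, fun k _ => by rw [hfK _ hiK, zero_mul]⟩
        · rw [hK, Set.mem_setOf_eq] at hiK
          push_neg at hiK
          by_cases hdist : dist (xp i) o ≤ 2*r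
          · obtain ⟨k1, hk1⟩ := hiK hdist
            refine ⟨k1 + 1, fun k hk => ?_⟩
            have hzero : Hh k (xp i) = 0 := by
              by_contra h0
              have := (hHh_pos_facts k (xp i) h0).2 k1 (lt_of_lt_of_le (Nat.lt_succ_self k1) hk)
              linarith
            rw [hzero, mul_zero]
          · refine ⟨0, fun k _ => ?_⟩
            have hzero : Hh k (xp i) = 0 := by
              by_contra h0
              exact hdist (hHh_pos_facts k (xp i) h0).1
            rw [hzero, mul_zero]
      choose k0 hk0 using hdeath
      refine ⟨Finset.univ.sup k0, ?_⟩
      have hμ0 : Φk (Finset.univ.sup k0) (∑ i, a i • δ (xp i)) = 0 := by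
        rw [eval_sum hδ (hΦkl (Finset.univ.sup k0))]
        exact Finset.sum_eq_zero fun i _ => by
          rw [hk0 i _ (Finset.le_sup (Finset.mem_univ i)), mul_zero]
      have h1 := pair_transfer (hΦkn (Finset.univ.sup k0)) happ
      rw [hμ0, sub_zero] at h1
      have h2 : Φk (Finset.univ.sup k0) γ ≤ |Φk (Finset.univ.sup k0) γ| := le_abs_self _
      linarith
    by_contra hover
    push_neg at hover
    obtain ⟨k, hk⟩ := hlimit ((φ γ - ε/4)/2) (by linarith)
    have := htel k
    linarith
  -- conclusion via Hahn–Banach in the quotient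
  refine ⟨K, hKcompact, hoK, ?_⟩
  intro γ hγ
  by_contra hno
  push_neg at hno
  set Y : Submodule ℝ F := freeSpan δ K with hY
  haveI hYc : IsClosed (Y : Set F) := Submodule.isClosed_topologicalClosure _
  have hno' : ∀ z ∈ Y, ε < ‖γ - z‖ := hno
  have hnorm : ε ≤ ‖(Submodule.Quotient.mk γ : F ⧸ Y)‖ := by
    by_contra hlt
    push_neg at hlt
    obtain ⟨m, hm1, hm2⟩ := Submodule.Quotient.norm_mk_lt
      (Submodule.Quotient.mk γ : F ⧸ Y)
      (show (0:ℝ) < ε - ‖(Submodule.Quotient.mk γ : F ⧸ Y)‖ by linarith)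
    have hγm : γ - m ∈ Y := by
      have h1 : Y.mkQ (γ - m) = 0 := by
        rw [map_sub, Submodule.mkQ_apply, Submodule.mkQ_apply, hm1, sub_self]
      rw [Submodule.mkQ_apply] at h1
      exact (Submodule.Quotient.mk_eq_zero Y).1 h1
    have h2 := hno' (γ - m) hγm
    have h3 : γ - (γ - m) = m := by abel
    rw [h3] at h2
    linarith
  have hne : (Submodule.Quotient.mk γ : F ⧸ Y) ≠ 0 := by
    intro h0
    rw [h0, norm_zero] at hnorm
    linarith
  obtain ⟨ψq, hψq1, hψq2⟩ := exists_dual_vector ℝ _ (norm_ne_zero_iff.2 hne)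
  set mkCLM : F →L[ℝ] F ⧸ Y := LinearMap.mkContinuous Y.mkQ 1 (fun x => by
    rw [one_mul, Submodule.mkQ_apply]
    exact Submodule.Quotient.norm_mk_le Y x) with hmkdef
  have hmkapp : ∀ x : F, mkCLM x = Submodule.Quotient.mk x := by
    intro x
    rw [hmkdef, LinearMap.mkContinuous_apply, Submodule.mkQ_apply]
  set φ : F →L[ℝ] ℝ := ψq.comp mkCLM with hφdef
  have hφnorm : ‖φ‖ ≤ 1 := by
    calc ‖φ‖ ≤ ‖ψq‖ * ‖mkCLM‖ := ContinuousLinearMap.opNorm_comp_le _ _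
      _ ≤ 1 * 1 := by
          rw [hψq1]
          have := LinearMap.mkContinuous_norm_le Y.mkQ (by norm_num : (0:ℝ) ≤ 1) (fun x => by
            rw [one_mul, Submodule.mkQ_apply]
            exact Submodule.Quotient.norm_mk_le Y x)
          rw [one_mul, one_mul]
          exact this
      _ = 1 := by norm_num
  have hφK : ∀ x ∈ K, φ (δ x) = 0 := by
    intro x hx
    rw [hφdef, ContinuousLinearMap.comp_apply, hmkapp]
    have h2 : δ x ∈ Y := mem_freeSpan δ hx
    have h3 : (Submodule.Quotient.mk (δ x) : F ⧸ Y) = 0 :=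
      (Submodule.Quotient.mk_eq_zero Y).2 h2
    rw [h3, map_zero]
  have hφγ : φ γ = ‖(Submodule.Quotient.mk γ : F ⧸ Y)‖ := by
    rw [hφdef, ContinuousLinearMap.comp_apply, hmkapp]
    exact_mod_cast hψq2
  have hbound := hfinal γ hγ φ hφnorm hφK
  rw [hφγ] at hbound
  linarith
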